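/- Every su(2) block for ψ contains an even number of qubits. -/

import Mathlib

open scoped Matrix

noncomputable section

/-- The `n`-qubit Hilbert space `(ℂ²)^{⊗n}`, realized as functions `(Fin n → Fin 2) → ℂ`. -/
abbrev QState (n : ℕ) := (Fin n → Fin 2) → ℂ

/-- The ambient real vector space `ℝ × (Fin n → M₂(ℂ))` containing `u(1) ⊕ su(2)^n`. -/
abbrev GV (n : ℕ) := ℝ × (Fin n → Matrix (Fin 2) (Fin 2) ℂ)

/-- `su(2)`: traceless skew-Hermitian `2 × 2` complex matrices, as a real subspace. -/
def su2 : Submodule ℝ (Matrix (Fin 2) (Fin 2) ℂ) where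
  carrier := {X | Xᴴ = -X ∧ X.trace = 0}
  add_mem' := by
    rintro X Y ⟨hX1, hX2⟩ ⟨hY1, hY2⟩
    exact ⟨by rw [Matrix.conjTranspose_add, hX1, hY1, neg_add],
           by rw [Matrix.trace_add, hX2, hY2, add_zero]⟩
  zero_mem' := ⟨by simp, by simp⟩
  smul_mem' := by
    rintro r X ⟨hX1, hX2⟩
    exact ⟨by rw [Matrix.conjTranspose_smul, hX1, star_trivial, smul_neg],
           by rw [Matrix.trace_smul, hX2, smul_zero]⟩

/-- The Lie algebra `g = u(1) ⊕ su(2)^n` as a real subspace of `GV n`. -/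
def gSub (n : ℕ) : Submodule ℝ (GV n) :=
  (⊤ : Submodule ℝ ℝ).prod (Submodule.pi Set.univ fun _ => su2)

/-- `g_S`: elements `(0, X)` of `g` with `X j = 0` for `j ∉ S`. -/
def gS {n : ℕ} (S : Set (Fin n)) : Submodule ℝ (GV n) :=
  (⊥ : Submodule ℝ ℝ).prod (Submodule.pi Set.univ fun j =>
    letI := Classical.dec (j ∈ S)
    if j ∈ S then su2 else ⊥)

/-- `ḡ_S`: elements `(t, X)` of `g` with `X j = 0` for `j ∈ S`. -/
def gBar {n : ℕ} (S : Set (Fin n)) : Submodule ℝ (GV n) :=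
  (⊤ : Submodule ℝ ℝ).prod (Submodule.pi Set.univ fun j =>
    letI := Classical.dec (j ∈ S)
    if j ∈ S then (⊥ : Submodule ℝ (Matrix (Fin 2) (Fin 2) ℂ)) else su2)

/-- The projection `P_j : g → su(2)`, `(t, X) ↦ X j`. -/
def Pj {n : ℕ} (j : Fin n) : GV n →ₗ[ℝ] Matrix (Fin 2) (Fin 2) ℂ :=
  (LinearMap.proj j).comp (LinearMap.snd ℝ ℝ (Fin n → Matrix (Fin 2) (Fin 2) ℂ))

/-- Apply the matrix `X` to qubit `j` of the state `ψ`. -/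
def applySingle {n : ℕ} (j : Fin n) (X : Matrix (Fin 2) (Fin 2) ℂ) (ψ : QState n) : QState n :=
  fun I => ∑ k : Fin 2, X (I j) k * ψ (Function.update I j k)

/-- The infinitesimal local-unitary action: `dΦ_ψ(t, X) = i t ψ + Σ_j X_j ψ`. -/
def dPhi {n : ℕ} (ψ : QState n) : GV n →ₗ[ℝ] QState n where
  toFun x := fun I => Complex.I * (x.1 : ℂ) * ψ I + ∑ j, applySingle j (x.2 j) ψ I
  map_add' x y := by
    funext I
    simp only [applySingle, Prod.fst_add, Prod.snd_add, Pi.add_apply, Matrix.add_apply,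
      Complex.ofReal_add, add_mul, Finset.sum_add_distrib]
    ring
  map_smul' r x := by
    funext I
    simp only [applySingle, Prod.smul_fst, Prod.smul_snd, Pi.smul_apply, Matrix.smul_apply,
      smul_eq_mul, Complex.real_smul, Complex.ofReal_mul, RingHom.id_apply,
      Finset.mul_sum, mul_add]
    congr 1
    · ring
    · refine Finset.sum_congr rfl fun j _ => Finset.sum_congr rfl fun k _ => by ring

/-- The stabilizer subalgebra `K_ψ = {(t,X) ∈ g : dΦ_ψ(t,X) = 0}`. -/
def stab {n : ℕ} (ψ : QState n) : Submodule ℝ (GV n) :=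
  gSub n ⊓ LinearMap.ker (dPhi ψ)

/-- The componentwise bracket on `g` (zero in the `u(1)` component). -/
def gBracket {n : ℕ} (x y : GV n) : GV n :=
  (0, fun j => ⁅x.2 j, y.2 j⁆)

/-- An `su(2)` block for `ψ`: a set `S` of qubits with `dim (K_ψ ∩ g_S) > 1` and
`dim (K_ψ ∩ g_{S'}) = 0` for every proper subset `S' ⊊ S`. -/
def Su2Block {n : ℕ} (ψ : QState n) (S : Set (Fin n)) : Prop :=
  1 < Module.finrank ℝ ↥(stab ψ ⊓ gS S) ∧
  ∀ S' : Set (Fin n), S' ⊂ S → Module.finrank ℝ ↥(stab ψ ⊓ gS S') = 0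

/-- The union `B` of all `su(2)` blocks for `ψ`. -/
def blockUnion {n : ℕ} (ψ : QState n) : Set (Fin n) :=
  {q | ∃ S : Set (Fin n), Su2Block ψ S ∧ q ∈ S}

/-- The number `p` of `su(2)` blocks for `ψ`. -/
def blockCount {n : ℕ} (ψ : QState n) : ℕ :=
  {S : Set (Fin n) | Su2Block ψ S}.ncard

/-- `ψ` factors across the set `S` of qubits: `ψ(I) = φ(I|_S) · χ(I|_{Sᶜ})`. -/
def FactorsAcross {n : ℕ} (ψ : QState n) (S : Set (Fin n)) : Prop :=
  ∃ (φ : (↥S → Fin 2) → ℂ) (χ : (↥(Sᶜ) → Fin 2) → ℂ),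
    ∀ I : Fin n → Fin 2, ψ I = φ (fun j => I j.1) * χ (fun j => I j.1)

/-- `ψ` is a nonproduct state: it factors across no proper nonempty set of qubits. -/
def IsNonproduct {n : ℕ} (ψ : QState n) : Prop :=
  ∀ S : Set (Fin n), S ≠ ∅ → S ≠ Set.univ → ¬ FactorsAcross ψ S

/-- `ψ` has a single-qubit factor. -/
def HasSingleQubitFactor {n : ℕ} (ψ : QState n) : Prop :=
  ∃ j : Fin n, FactorsAcross ψ {j}

/-- Apply the local unitary (or just local linear) transformation `⊗_j U_j` to `ψ`. -/
def luApply {n : ℕ} (U : Fin n → Matrix (Fin 2) (Fin 2) ℂ) (ψ : QState n) : QState n :=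
  fun I => ∑ J : Fin n → Fin 2, (∏ j, U j (I j) (J j)) * ψ J

/-- Local unitary equivalence of `n`-qubit states. -/
def LUEquiv {n : ℕ} (ψ ψ' : QState n) : Prop :=
  ∃ U : Fin n → Matrix (Fin 2) (Fin 2) ℂ,
    (∀ j, U j ∈ Matrix.unitaryGroup (Fin 2) ℂ) ∧ ψ' = luApply U ψ

/-- The two-qubit singlet state `φ(a,b) = δ_{a0} δ_{b1} − δ_{a1} δ_{b0}`. -/
def singletFn : Fin 2 → Fin 2 → ℂ := fun a b =>
  if a = 0 ∧ b = 1 then 1 else if a = 1 ∧ b = 0 then -1 else 0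

/-- `ψ` has a singlet factor: it is LU-equivalent to a state that factors across a
two-element set of qubits, with the two-qubit factor being the singlet. -/
def HasSingletFactor {n : ℕ} (ψ : QState n) : Prop :=
  ∃ ψ' : QState n, LUEquiv ψ ψ' ∧ ∃ j k : Fin n, j ≠ k ∧
    ∃ χ : (↥(({j, k} : Set (Fin n))ᶜ) → Fin 2) → ℂ,
      ∀ I : Fin n → Fin 2, ψ' I = singletFn (I j) (I k) * χ (fun q => I q.1)

/-- The matrix `A = diag(i, −i) ∈ su(2)`. -/
def matA : Matrix (Fin 2) (Fin 2) ℂ := !![Complex.I, 0; 0, -Complex.I]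

/-- The generalized `n`-qubit GHZ state `α|0…0⟩ + β|1…1⟩`. -/
def ghz (n : ℕ) (α β : ℂ) : QState n := fun I =>
  if ∀ j, I j = 0 then α else if ∀ j, I j = 1 then β else 0

namespace Stmt7Aux

abbrev M2 := Matrix (Fin 2) (Fin 2) ℂ

variable {n : ℕ}

lemma aps_add_X (j : Fin n) (X Y : M2) (ψ : QState n) :
    applySingle j (X + Y) ψ = applySingle j X ψ + applySingle j Y ψ := by
  funext I
  simp [applySingle, add_mul, Finset.sum_add_distrib]

lemma aps_smul_X (j : Fin n) (c : ℂ) (X : M2) (ψ : QState n) :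
    applySingle j (c • X) ψ = c • applySingle j X ψ := by
  funext I
  simp [applySingle, Finset.mul_sum, mul_assoc]
  ring

lemma aps_zero_X (j : Fin n) (ψ : QState n) : applySingle j (0 : M2) ψ = 0 := by
  funext I; simp [applySingle]

lemma aps_sub_X (j : Fin n) (X Y : M2) (ψ : QState n) :
    applySingle j (X - Y) ψ = applySingle j X ψ - applySingle j Y ψ := by
  funext I
  simp [applySingle, sub_mul, Finset.sum_sub_distrib]

lemma aps_add_psi (j : Fin n) (X : M2) (ψ φ : QState n) :
    applySingle j X (ψ + φ) = applySingle j X ψ + applySingle j X φ := by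
  funext I
  simp [applySingle, mul_add, Finset.sum_add_distrib]

lemma aps_smul_psi (j : Fin n) (X : M2) (c : ℂ) (ψ : QState n) :
    applySingle j X (c • ψ) = c • applySingle j X ψ := by
  funext I
  simp only [applySingle, Pi.smul_apply, smul_eq_mul, Finset.mul_sum]
  exact Finset.sum_congr rfl fun k _ => by ring

lemma aps_zero_psi (j : Fin n) (X : M2) : applySingle j X (0 : QState n) = 0 := by
  funext I; simp [applySingle]

lemma aps_sub_psi (j : Fin n) (X : M2) (ψ φ : QState n) :
    applySingle j X (ψ - φ) = applySingle j X ψ - applySingle j X φ := by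
  funext I
  simp [applySingle, mul_sub, Finset.sum_sub_distrib]

lemma aps_sum_psi {α : Type*} (j : Fin n) (X : M2) (s : Finset α) (f : α → QState n) :
    applySingle j X (∑ k ∈ s, f k) = ∑ k ∈ s, applySingle j X (f k) := by
  classical
  induction s using Finset.induction_on with
  | empty => simp [aps_zero_psi]
  | @insert _ _ h ih => rw [Finset.sum_insert h, Finset.sum_insert h, aps_add_psi, ih]

lemma aps_comp_same (j : Fin n) (X Y : M2) (ψ : QState n) :
    applySingle j X (applySingle j Y ψ) = applySingle j (X * Y) ψ := by
  funext I
  simp only [applySingle, Function.update_self, Function.update_idem, Finset.mul_sum]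
  rw [Finset.sum_comm]
  refine Finset.sum_congr rfl fun m _ => ?_
  rw [Matrix.mul_apply, Finset.sum_mul]
  exact Finset.sum_congr rfl fun k _ => by ring

lemma aps_comm {j k : Fin n} (h : j ≠ k) (X Y : M2) (ψ : QState n) :
    applySingle j X (applySingle k Y ψ) = applySingle k Y (applySingle j X ψ) := by
  funext I
  simp only [applySingle, Finset.mul_sum]
  rw [Finset.sum_comm]
  refine Finset.sum_congr rfl fun b _ => Finset.sum_congr rfl fun a _ => ?_
  rw [Function.update_of_ne (Ne.symm h), Function.update_of_ne h, Function.update_comm h]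
  ring

lemma aps_one (j : Fin n) (ψ : QState n) : applySingle j (1 : M2) ψ = ψ := by
  funext I
  simp only [applySingle, Matrix.one_apply, ite_mul, one_mul, zero_mul]
  rw [Finset.sum_ite_eq Finset.univ (I j)]
  simp

end Stmt7Aux
namespace Stmt7Aux

variable {n : ℕ}

/-- The operator `ψ ↦ Σ_j X_j ψ` for a tuple of matrices `a`. -/
def Lsum (a : Fin n → M2) (ψ : QState n) : QState n :=
  ∑ j, applySingle j (a j) ψ

lemma Lsum_add (a b : Fin n → M2) (ψ : QState n) :
    Lsum (a + b) ψ = Lsum a ψ + Lsum b ψ := by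
  simp [Lsum, aps_add_X, Finset.sum_add_distrib]

lemma Lsum_smul (c : ℂ) (a : Fin n → M2) (ψ : QState n) :
    Lsum (c • a) ψ = c • Lsum a ψ := by
  simp [Lsum, aps_smul_X, Finset.smul_sum]

lemma Lsum_zero_psi (a : Fin n → M2) : Lsum a (0 : QState n) = 0 := by
  simp [Lsum, aps_zero_psi]

/-- `Lsum` as a `ℂ`-linear map in the matrix tuple. -/
def LsumL (ψ : QState n) : (Fin n → M2) →ₗ[ℂ] QState n where
  toFun a := Lsum a ψ
  map_add' a b := Lsum_add a b ψ
  map_smul' c a := Lsum_smul c a ψ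

lemma dPhi_pair (ψ : QState n) (a : Fin n → M2) :
    dPhi ψ (0, a) = Lsum a ψ := by
  funext I
  simp [dPhi, Lsum, Finset.sum_apply]

/-- The key commutator identity for the infinitesimal action. -/
lemma Lsum_bracket (a b : Fin n → M2) (ψ : QState n) :
    Lsum (fun j => a j * b j - b j * a j) ψ = Lsum a (Lsum b ψ) - Lsum b (Lsum a ψ) := by
  classical
  have expand : ∀ u v : Fin n → M2,
      Lsum u (Lsum v ψ) = ∑ j, ∑ k, applySingle j (u j) (applySingle k (v k) ψ) := by
    intro u v
    unfold Lsum
    exact Finset.sum_congr rfl fun j _ => aps_sum_psi j (u j) _ _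
  set F : Fin n → Fin n → QState n := fun j k => applySingle j (a j) (applySingle k (b k) ψ)
  set G : Fin n → Fin n → QState n := fun j k => applySingle j (b j) (applySingle k (a k) ψ)
  have hG : ∑ j, ∑ k, G j k = ∑ j, ∑ k, (if k = j then G j j else F j k) := by
    rw [Finset.sum_comm]
    refine Finset.sum_congr rfl fun j _ => Finset.sum_congr rfl fun k _ => ?_
    by_cases h : k = j
    · subst h; simp
    · rw [if_neg h]
      exact aps_comm h (b k) (a j) ψ
  rw [expand, expand, hG, ← Finset.sum_sub_distrib]
  unfold Lsum
  refine Finset.sum_congr rfl fun j _ => ?_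
  rw [← Finset.sum_sub_distrib, Finset.sum_eq_single j]
  · rw [if_pos rfl]
    simp only [F, G]
    rw [aps_comp_same, aps_comp_same, ← aps_sub_X]
  · intro k _ hk
    rw [if_neg hk, sub_self]
  · intro h; exact absurd (Finset.mem_univ j) h

end Stmt7Aux
namespace Stmt7Aux

variable {n : ℕ}

lemma mem_stab_gS_iff (ψ : QState n) (S : Set (Fin n)) (x : GV n) :
    x ∈ stab ψ ⊓ gS S ↔
      x.1 = 0 ∧ (∀ j, x.2 j ∈ su2) ∧ (∀ j ∉ S, x.2 j = 0) ∧ Lsum x.2 ψ = 0 := by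
  constructor
  · intro hx
    rw [Submodule.mem_inf] at hx
    obtain ⟨hst, hgs⟩ := hx
    rw [stab, Submodule.mem_inf] at hst
    obtain ⟨hg, hker⟩ := hst
    rw [gS, Submodule.mem_prod] at hgs
    obtain ⟨h1, h2⟩ := hgs
    rw [Submodule.mem_bot] at h1
    refine ⟨h1, fun j => ?_, fun j hj => ?_, ?_⟩
    · rw [gSub, Submodule.mem_prod] at hg
      exact hg.2 j (Set.mem_univ j)
    · have h5 : x.2 j ∈ (letI := Classical.dec (j ∈ S); if j ∈ S then su2 else (⊥ : Submodule ℝ M2)) := h2 j (Set.mem_univ j)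
      rw [if_neg hj] at h5
      exact h5
    · rw [LinearMap.mem_ker] at hker
      have : x = (0, x.2) := by rw [← h1]
      rw [this, dPhi_pair] at hker
      exact hker
  · rintro ⟨h1, h2, h3, h4⟩
    have hx : x = (0, x.2) := by rw [← h1]
    refine Submodule.mem_inf.mpr ⟨?_, ?_⟩
    · rw [stab, Submodule.mem_inf]
      refine ⟨?_, ?_⟩
      · rw [gSub, Submodule.mem_prod]
        exact ⟨Submodule.mem_top, fun j _ => h2 j⟩
      · rw [LinearMap.mem_ker, hx, dPhi_pair]
        exact h4
    · rw [gS, Submodule.mem_prod, Submodule.mem_bot]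
      refine ⟨h1, fun j _ => ?_⟩
      show x.2 j ∈ (letI := Classical.dec (j ∈ S); if j ∈ S then su2 else (⊥ : Submodule ℝ M2))
      by_cases hj : j ∈ S
      · rw [if_pos hj]; exact h2 j
      · rw [if_neg hj, Submodule.mem_bot]; exact h3 j hj

lemma su2_bracket {X Y : M2} (hX : X ∈ su2) (hY : Y ∈ su2) : X * Y - Y * X ∈ su2 := by
  obtain ⟨hX1, hX2⟩ := hX
  obtain ⟨hY1, hY2⟩ := hY
  constructor
  · rw [Matrix.conjTranspose_sub, Matrix.conjTranspose_mul, Matrix.conjTranspose_mul,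
      hX1, hY1]
    simp [neg_sub]
  · rw [Matrix.trace_sub, Matrix.trace_mul_comm, sub_self]

/-- `K = stab ψ ⊓ gS S` is closed under the componentwise bracket. -/
lemma stab_gS_bracket (ψ : QState n) (S : Set (Fin n)) {a b : Fin n → M2}
    (ha : ((0 : ℝ), a) ∈ stab ψ ⊓ gS S) (hb : ((0 : ℝ), b) ∈ stab ψ ⊓ gS S) :
    ((0 : ℝ), fun j => a j * b j - b j * a j) ∈ stab ψ ⊓ gS S := by
  rw [mem_stab_gS_iff] at ha hb ⊢
  obtain ⟨-, ha2, ha3, ha4⟩ := ha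
  obtain ⟨-, hb2, hb3, hb4⟩ := hb
  have ha3' : ∀ j ∉ S, a j = 0 := ha3
  have hb3' : ∀ j ∉ S, b j = 0 := hb3
  have ha4' : Lsum a ψ = 0 := ha4
  have hb4' : Lsum b ψ = 0 := hb4
  refine ⟨rfl, fun j => su2_bracket (ha2 j) (hb2 j), fun j hj => by
    show a j * b j - b j * a j = 0
    rw [ha3' j hj, hb3' j hj]; simp, ?_⟩
  show Lsum _ ψ = 0
  rw [Lsum_bracket, ha4', hb4', Lsum_zero_psi, Lsum_zero_psi, sub_zero]

/-- A skew-Hermitian pair with `a + i b = 0` must vanish. -/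
lemma skew_pair {X Y : M2} (hX : Xᴴ = -X) (hY : Yᴴ = -Y)
    (h : X + Complex.I • Y = 0) : X = 0 ∧ Y = 0 := by
  have h2 : -X + Complex.I • Y = 0 := by
    have := congrArg Matrix.conjTranspose h
    rwa [Matrix.conjTranspose_add, Matrix.conjTranspose_smul, hX, hY,
      Complex.star_def, Complex.conj_I, neg_smul, smul_neg, neg_neg,
      Matrix.conjTranspose_zero] at this
  have hXX : X = 0 := by
    have := sub_eq_zero.mpr (h.trans h2.symm)
    simp only [add_sub_add_right_eq_sub, sub_neg_eq_add] at this
    have h2X : (2 : ℂ) • X = 0 := by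
      rw [two_smul]
      exact_mod_cast this
    have := smul_eq_zero.mp h2X
    simpa using this
  refine ⟨hXX, ?_⟩
  rw [hXX, zero_add] at h
  have := smul_eq_zero.mp h
  simpa [Complex.I_ne_zero] using this

end Stmt7Aux
namespace Stmt7Aux

/-- Cayley–Hamilton for traceless 2×2: `X² = (X₀₀² + X₀₁X₁₀) • 1`. -/
lemma traceless_sq (X : M2) (htr : X.trace = 0) :
    X * X = (X 0 0 * X 0 0 + X 0 1 * X 1 0) • 1 := by
  have h11 : X 1 1 = -X 0 0 := by
    rw [Matrix.trace_fin_two] at htr; linear_combination htr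
  ext i j
  fin_cases i <;> fin_cases j <;>
    simp [Matrix.mul_apply, Fin.sum_univ_two, Matrix.one_apply, h11] <;> ring

/-- Commuting traceless 2×2 matrices are linearly dependent. -/
lemma sl2_comm_dep {X Y : M2} (hX : X.trace = 0) (hY : Y.trace = 0)
    (hcomm : X * Y = Y * X) (hX0 : X ≠ 0) : ∃ c : ℂ, Y = c • X := by
  have hX11 : X 1 1 = -X 0 0 := by
    rw [Matrix.trace_fin_two] at hX; linear_combination hX
  have hY11 : Y 1 1 = -Y 0 0 := by
    rw [Matrix.trace_fin_two] at hY; linear_combination hY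
  have e00 := congrFun (congrFun hcomm 0) 0
  have e01 := congrFun (congrFun hcomm 0) 1
  have e10 := congrFun (congrFun hcomm 1) 0
  simp only [Matrix.mul_apply, Fin.sum_univ_two, hX11, hY11] at e00 e01 e10
  have hbf : X 0 1 * Y 1 0 = Y 0 1 * X 1 0 := by linear_combination e00
  have hae : X 0 0 * Y 0 1 = X 0 1 * Y 0 0 := by linear_combination e01 / 2
  have hcd : X 1 0 * Y 0 0 = X 0 0 * Y 1 0 := by linear_combination e10 / 2
  have key : ∀ k : ℂ, Y 0 0 = k * X 0 0 → Y 0 1 = k * X 0 1 → Y 1 0 = k * X 1 0 →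
      Y = k • X := by
    intro k hd he hf
    ext i j
    fin_cases i <;> fin_cases j <;>
      simp [hY11, hX11, hd, he, hf] <;> ring
  by_cases hb : X 0 1 ≠ 0
  · refine ⟨Y 0 1 / X 0 1, key _ ?_ ?_ ?_⟩
    · field_simp; linear_combination -hae
    · field_simp
    · field_simp; linear_combination hbf
  push_neg at hb
  by_cases hc : X 1 0 ≠ 0
  · refine ⟨Y 1 0 / X 1 0, key _ ?_ ?_ ?_⟩
    · field_simp; linear_combination hcd
    · have h0 : Y 0 1 * X 1 0 = 0 := by rw [← hbf, hb, zero_mul]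
      rcases mul_eq_zero.mp h0 with h | h
      · rw [h, hb, mul_zero]
      · exact absurd h hc
    · field_simp
  push_neg at hc
  have ha : X 0 0 ≠ 0 := by
    intro ha0
    apply hX0
    ext i j
    fin_cases i <;> fin_cases j <;> simp [hX11, ha0, hb, hc]
  refine ⟨Y 0 0 / X 0 0, key _ ?_ ?_ ?_⟩
  · field_simp
  · have h0 : X 0 0 * Y 0 1 = 0 := by rw [hae, hb, zero_mul]
    rcases mul_eq_zero.mp h0 with h | h
    · exact absurd h ha
    · rw [h, hb, mul_zero]
  · have h0 : X 0 0 * Y 1 0 = 0 := by rw [← hcd, hc, zero_mul]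
    rcases mul_eq_zero.mp h0 with h | h
    · exact absurd h ha
    · rw [h, hc, mul_zero]

/-- If `[X,E] = λ•E` with `E ≠ 0`, `λ ≠ 0`, `tr X = 0`, then `X² = (λ²/4)•1`. -/
lemma sq_of_eigen {X E : M2} {lam : ℂ} (htr : X.trace = 0) (hE : E ≠ 0)
    (hlam : lam ≠ 0) (hcm : X * E - E * X = lam • E) :
    X * X = ((lam ^ 2 / 4) : ℂ) • 1 := by
  have hCH : X * X = (X 0 0 * X 0 0 + X 0 1 * X 1 0) • 1 := traceless_sq X htr
  set δ := X 0 0 * X 0 0 + X 0 1 * X 1 0 with hδdef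
  have hXE : X * E = E * X + lam • E := by
    rw [← hcm]; abel
  have h1 : X * (X * E) = δ • E := by
    rw [← Matrix.mul_assoc, hCH, Matrix.smul_mul, Matrix.one_mul]
  have h2 : E * (X * X) = δ • E := by
    rw [hCH, Matrix.mul_smul, Matrix.mul_one]
  have hA : X * (E * X) = δ • E + lam • (E * X) := by
    calc X * (E * X) = (X * E) * X := by rw [Matrix.mul_assoc]
    _ = (E * X + lam • E) * X := by rw [hXE]
    _ = E * (X * X) + lam • (E * X) := by
        rw [Matrix.add_mul, Matrix.smul_mul, Matrix.mul_assoc]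
    _ = δ • E + lam • (E * X) := by rw [h2]
  have hB : X * (X * E) = X * (E * X) + lam • (X * E) := by
    calc X * (X * E) = X * (E * X + lam • E) := by rw [← hXE]
    _ = X * (E * X) + lam • (X * E) := by rw [Matrix.mul_add, Matrix.mul_smul]
  have big : δ • E = δ • E + ((2 * lam) • (E * X) + (lam * lam) • E) := by
    have hlamXE : lam • (X * E) = lam • (E * X) + (lam * lam) • E := by
      rw [hXE, smul_add, smul_smul]
    have h2l : (2 * lam) • (E * X) = lam • (E * X) + lam • (E * X) := by
      rw [← add_smul]; ring_nf
    calc δ • E = X * (X * E) := h1.symm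
    _ = (δ • E + lam • (E * X)) + (lam • (E * X) + (lam * lam) • E) := by
        rw [hB, hA, hlamXE]
    _ = δ • E + ((2 * lam) • (E * X) + (lam * lam) • E) := by rw [h2l]; abel
  have h0 : (2 * lam) • (E * X) + (lam * lam) • E = 0 := (left_eq_add.mp big)
  have hEX : E * X = (-(lam / 2)) • E := by
    have h1' : (2 * lam) • (E * X) = -((lam * lam) • E) := eq_neg_of_add_eq_zero_left h0
    have h2' : E * X = ((2 * lam)⁻¹ * -(lam * lam)) • E := by
      rw [mul_smul, neg_smul, ← h1',
        inv_smul_smul₀ (by simp [hlam] : (2 : ℂ) * lam ≠ 0)]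
    rw [h2']
    congr 1
    field_simp
  have hXE2 : X * E = (lam / 2) • E := by
    rw [hXE, hEX, ← add_smul]
    congr 1
    ring
  have hfin : δ • E = (lam ^ 2 / 4) • E := by
    calc δ • E = X * (X * E) := h1.symm
    _ = (lam / 2) • ((lam / 2) • E) := by rw [hXE2, Matrix.mul_smul, hXE2]
    _ = (lam ^ 2 / 4) • E := by rw [smul_smul]; congr 1; ring
  have hδ : δ = lam ^ 2 / 4 := by
    have hz : (δ - lam ^ 2 / 4) • E = 0 := by rw [sub_smul, hfin]; abel
    rcases smul_eq_zero.mp hz with h | h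
    · exact sub_eq_zero.mp h
    · exact absurd h hE
  rw [hCH, hδ]

end Stmt7Aux
namespace Stmt7Aux

variable {n : ℕ}

lemma smul_state_eq_zero {c : ℂ} {ψ : QState n} (h : c • ψ = 0) (hψ : ψ ≠ 0) : c = 0 := by
  by_contra hc
  apply hψ
  funext I
  have := congrFun h I
  simp only [Pi.smul_apply, smul_eq_mul, Pi.zero_apply] at this ⊢
  exact (mul_eq_zero.mp this).resolve_left hc

/-- Eigenvalues of a sum of commuting involutions over `T` are of the form `|T| - 2m`. -/
lemma eigen_sum_invol (T : Finset (Fin n)) (X : Fin n → M2)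
    (hsq : ∀ j ∈ T, X j * X j = 1) (ψ : QState n) (hψ : ψ ≠ 0) (c : ℂ)
    (h : ∑ j ∈ T, applySingle j (X j) ψ = c • ψ) :
    ∃ m : ℕ, m ≤ T.card ∧ c = (T.card : ℂ) - 2 * m := by
  classical
  induction T using Finset.induction_on generalizing ψ c with
  | empty =>
    refine ⟨0, by simp, ?_⟩
    rw [Finset.sum_empty] at h
    have := smul_state_eq_zero h.symm hψ
    simp [this]
  | @insert j T' hj ih =>
    have hXj : X j * X j = 1 := hsq j (Finset.mem_insert_self j T')
    have hsq' : ∀ k ∈ T', X k * X k = 1 := fun k hk =>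
      hsq k (Finset.mem_insert_of_mem hk)
    set A : QState n → QState n := fun φ => applySingle j (X j) φ with hA
    have hAA : ∀ φ, A (A φ) = φ := by
      intro φ
      rw [hA]
      simp only
      rw [aps_comp_same, hXj, aps_one]
    set L : QState n → QState n := fun φ => ∑ k ∈ T', applySingle k (X k) φ with hL
    have hAL : ∀ φ, A (L φ) = L (A φ) := by
      intro φ
      rw [hA, hL]
      simp only
      rw [aps_sum_psi]
      refine Finset.sum_congr rfl fun k hk => ?_
      exact aps_comm (by rintro rfl; exact hj hk) (X j) (X k) φ
    have hsum : L ψ + A ψ = c • ψ := by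
      rw [hL, hA]
      simp only
      rw [← h, Finset.sum_insert hj]
      abel
    -- apply A to hsum
    have hAadd : ∀ φ₁ φ₂ : QState n, A (φ₁ + φ₂) = A φ₁ + A φ₂ := fun _ _ => aps_add_psi _ _ _ _
    have hAsmul : ∀ (d : ℂ) (φ : QState n), A (d • φ) = d • A φ := fun _ _ => aps_smul_psi _ _ _ _
    have hLadd : ∀ φ₁ φ₂ : QState n, L (φ₁ + φ₂) = L φ₁ + L φ₂ := by
      intro φ₁ φ₂
      rw [hL]; simp only
      rw [← Finset.sum_add_distrib]
      exact Finset.sum_congr rfl fun k _ => aps_add_psi _ _ _ _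
    have hLsmul : ∀ (d : ℂ) (φ : QState n), L (d • φ) = d • L φ := by
      intro d φ
      rw [hL]; simp only
      rw [Finset.smul_sum]
      exact Finset.sum_congr rfl fun k _ => aps_smul_psi _ _ _ _
    have hsum2 : L (A ψ) + ψ = c • A ψ := by
      have := congrArg A hsum
      rw [hAadd, hAL, hAA, hAsmul] at this
      exact this
    set ψp : QState n := ψ + A ψ with hψp
    set ψm : QState n := ψ - A ψ with hψm
    have hLp : L ψp = (c - 1) • ψp := by
      rw [hψp, hLadd]
      have h1 : L ψ = c • ψ - A ψ := by rw [← hsum]; abel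
      have h2 : L (A ψ) = c • A ψ - ψ := by rw [← hsum2]; abel
      rw [h1, h2, sub_smul, smul_add, one_smul]
      abel
    have hLm : L ψm = (c + 1) • ψm := by
      have hLsub : L (ψ - A ψ) = L ψ - L (A ψ) := by
        have : ψ - A ψ + A ψ = ψ := by abel
        have h' := hLadd (ψ - A ψ) (A ψ)
        rw [this] at h'
        rw [eq_sub_of_add_eq h'.symm]
      rw [hψm, hLsub]
      have h1 : L ψ = c • ψ - A ψ := by rw [← hsum]; abel
      have h2 : L (A ψ) = c • A ψ - ψ := by rw [← hsum2]; abel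
      rw [h1, h2, add_smul, smul_sub, one_smul]
      abel
    have hne : ψp ≠ 0 ∨ ψm ≠ 0 := by
      by_contra hcon
      push_neg at hcon
      apply hψ
      have : ψp + ψm = (2 : ℂ) • ψ := by rw [hψp, hψm, two_smul]; abel
      rw [hcon.1, hcon.2, add_zero] at this
      have h2 : (2 : ℂ) • ψ = 0 := this.symm
      have := smul_eq_zero.mp h2
      rcases this with h | h
      · norm_num at h
      · exact h
    rcases hne with hne | hne
    · obtain ⟨m, hm, hc⟩ := ih hsq' ψp hne (c - 1) hLp
      refine ⟨m, le_trans hm (by rw [Finset.card_insert_of_notMem hj]; omega), ?_⟩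
      rw [Finset.card_insert_of_notMem hj]
      push_cast
      linear_combination hc
    · obtain ⟨m, hm, hc⟩ := ih hsq' ψm hne (c + 1) hLm
      refine ⟨m + 1, by rw [Finset.card_insert_of_notMem hj]; omega, ?_⟩
      rw [Finset.card_insert_of_notMem hj]
      push_cast
      linear_combination hc

end Stmt7Aux
namespace Stmt7Aux

/-- Traceless 2×2 matrices as a complex submodule. -/
def sl2 : Submodule ℂ M2 := LinearMap.ker (Matrix.traceLinearMap (Fin 2) ℂ ℂ)

lemma mem_sl2 {X : M2} : X ∈ sl2 ↔ X.trace = 0 := Iff.rfl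

lemma finrank_M2 : Module.finrank ℂ M2 = 4 := by
  rw [Module.finrank_matrix]
  simp

lemma finrank_sl2 : Module.finrank ℂ ↥sl2 = 3 := by
  have hsurj : Function.Surjective (Matrix.traceLinearMap (Fin 2) ℂ ℂ) := by
    intro c
    refine ⟨!![c, 0; 0, 0], ?_⟩
    simp [Matrix.traceLinearMap, Matrix.trace_fin_two]
  have hrange : LinearMap.range (Matrix.traceLinearMap (Fin 2) ℂ ℂ) = ⊤ :=
    LinearMap.range_eq_top.mpr hsurj
  have h4 := LinearMap.finrank_range_add_finrank_ker (Matrix.traceLinearMap (Fin 2) ℂ ℂ)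
  rw [hrange, finrank_top, finrank_M2] at h4
  have h1 : Module.finrank ℂ ℂ = 1 := Module.finrank_self ℂ
  rw [h1] at h4
  show Module.finrank ℂ ↥(LinearMap.ker (Matrix.traceLinearMap (Fin 2) ℂ ℂ)) = 3
  omega

lemma eigpair_exists (W : Submodule ℂ M2)
    (hbr : ∀ x ∈ W, ∀ y ∈ W, x * y - y * x ∈ W)
    (htr : ∀ x ∈ W, x.trace = 0)
    (hdim : 1 < Module.finrank ℂ ↥W) :
    ∃ x ∈ W, ∃ e ∈ W, e ≠ 0 ∧ ∃ lam : ℂ, lam ≠ 0 ∧ x * e - e * x = lam • e := by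
  have hle : W ≤ sl2 := fun x hx => htr x hx
  have hup : Module.finrank ℂ ↥W ≤ 3 := finrank_sl2 ▸ Submodule.finrank_mono hle
  rcases eq_or_lt_of_le hup with h3 | h2
  · -- W = sl2
    have hW : W = sl2 := Submodule.eq_of_le_of_finrank_le hle (by rw [finrank_sl2, h3])
    refine ⟨!![1, 0; 0, -1], ?_, !![0, 1; 0, 0], ?_, ?_, 2, two_ne_zero, ?_⟩
    · rw [hW, mem_sl2, Matrix.trace_fin_two]; simp
    · rw [hW, mem_sl2, Matrix.trace_fin_two]; simp
    · intro hcon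
      have := congrFun (congrFun hcon 0) 1
      simp at this
    · ext i j
      fin_cases i <;> fin_cases j <;>
        simp [Matrix.mul_apply, Fin.sum_univ_two] <;> norm_num
  · -- finrank W = 2
    have h2' : Module.finrank ℂ ↥W = 2 := by omega
    have b := Module.finBasisOfFinrankEq ℂ ↥W h2'
    set u : M2 := (b 0 : M2) with hu
    set v : M2 := (b 1 : M2) with hv
    have hum : u ∈ W := (b 0).2
    have hvm : v ∈ W := (b 1).2
    have hindep : ∀ s t : ℂ, s • u + t • v = 0 → s = 0 ∧ t = 0 := by
      intro s t hst
      have hsub : s • b 0 + t • b 1 = (0 : ↥W) := by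
        apply Subtype.ext
        simpa using hst
      have h0 := congrArg (fun z => b.repr z 0) hsub
      have h1 := congrArg (fun z => b.repr z 1) hsub
      simp only [map_add, map_smul, Module.Basis.repr_self, Finsupp.add_apply,
        Finsupp.smul_apply, Finsupp.single_apply, map_zero, Finsupp.coe_zero,
        Pi.zero_apply, smul_eq_mul] at h0 h1
      norm_num at h0 h1
      exact ⟨h0, h1⟩
    have hu0 : u ≠ 0 := by
      intro h0
      have := (hindep 1 0 (by rw [h0]; simp)).1
      norm_num at this
    set w : M2 := u * v - v * u with hw
    have hwm : w ∈ W := hbr u hum v hvm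
    have hw0 : w ≠ 0 := by
      intro h0
      have hcomm : u * v = v * u := by
        have := sub_eq_zero.mp h0
        exact this
      obtain ⟨k, hk⟩ := sl2_comm_dep (htr u hum) (htr v hvm) hcomm hu0
      have := hindep (-k) 1 (by rw [hk]; simp)
      norm_num at this
    -- represent w in the basis
    obtain ⟨α, β, hrep⟩ : ∃ α β : ℂ, w = α • u + β • v := by
      have := b.sum_repr ⟨w, hwm⟩
      rw [Fin.sum_univ_two] at this
      refine ⟨b.repr ⟨w, hwm⟩ 0, b.repr ⟨w, hwm⟩ 1, ?_⟩
      have := congrArg (Subtype.val) this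
      simpa using this.symm
    by_cases hβ : β ≠ 0
    · refine ⟨u, hum, w, hwm, hw0, β, hβ, ?_⟩
      conv_lhs => rw [hrep]
      have expand : u * (α • u + β • v) - (α • u + β • v) * u = β • (u * v - v * u) := by
        rw [Matrix.mul_add, Matrix.add_mul, Matrix.mul_smul, Matrix.smul_mul,
          Matrix.mul_smul, Matrix.smul_mul, smul_sub]
        abel
      rw [expand, ← hw]
    · push_neg at hβ
      by_cases hα : α ≠ 0
      · refine ⟨v, hvm, w, hwm, hw0, -α, neg_ne_zero.mpr hα, ?_⟩
        conv_lhs => rw [hrep]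
        have expand : v * (α • u + β • v) - (α • u + β • v) * v
            = (-α) • (u * v - v * u) := by
          rw [Matrix.mul_add, Matrix.add_mul, Matrix.mul_smul, Matrix.smul_mul,
            Matrix.mul_smul, Matrix.smul_mul, neg_smul, smul_sub]
          abel
        rw [expand, ← hw]
      · push_neg at hα
        exfalso
        apply hw0
        rw [hrep, hα, hβ]
        simp

end Stmt7Aux
namespace Stmt7Aux

variable {n : ℕ}

/-- The real subspace `{a | (0,a) ∈ K}` of matrix tuples. -/
def realPart (K : Submodule ℝ (GV n)) : Submodule ℝ (Fin n → M2) where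
  carrier := {a | ((0 : ℝ), a) ∈ K}
  add_mem' := by
    intro a b ha hb
    have := K.add_mem ha hb
    simpa [Prod.mk_add_mk] using this
  zero_mem' := by
    have := K.zero_mem
    exact this
  smul_mem' := by
    intro r a ha
    have := K.smul_mem r ha
    simpa [Prod.smul_mk] using this

lemma mem_realPart {K : Submodule ℝ (GV n)} {a : Fin n → M2} :
    a ∈ realPart K ↔ ((0 : ℝ), a) ∈ K := Iff.rfl

lemma real_smul_eq (r : ℝ) (x : Fin n → M2) : r • x = (r : ℂ) • x := by
  rw [← algebraMap_smul ℂ r x]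
  norm_num

/-- Decomposing a complex combination of real tuples into real and imaginary parts. -/
lemma cplx_combo (c d : ℂ) (a b : Fin n → M2) :
    c • a + d • b =
      ((c.re • a + d.re • b) + Complex.I • (c.im • a + d.im • b)) := by
  rw [real_smul_eq, real_smul_eq, real_smul_eq, real_smul_eq,
    smul_add, smul_smul, smul_smul]
  match_scalars <;> simp [Complex.ext_iff, mul_comm]

/-- Elements of the complex span of a real subspace have the form `a + i b`. -/
lemma cplx_rep (P : Submodule ℝ (Fin n → M2)) {x : Fin n → M2}
    (hx : x ∈ Submodule.span ℂ (P : Set (Fin n → M2))) :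
    ∃ a ∈ P, ∃ b ∈ P, x = a + Complex.I • b := by
  let Q : Submodule ℂ (Fin n → M2) :=
    { carrier := {x | ∃ a ∈ P, ∃ b ∈ P, x = a + Complex.I • b}
      add_mem' := by
        rintro x y ⟨a, ha, b, hb, rfl⟩ ⟨a', ha', b', hb', rfl⟩
        refine ⟨a + a', P.add_mem ha ha', b + b', P.add_mem hb hb', ?_⟩
        rw [smul_add]
        abel
      zero_mem' := ⟨0, P.zero_mem, 0, P.zero_mem, by simp⟩
      smul_mem' := by
        rintro c x ⟨a, ha, b, hb, rfl⟩
        refine ⟨c.re • a - c.im • b, P.sub_mem (P.smul_mem _ ha) (P.smul_mem _ hb),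
          c.im • a + c.re • b, P.add_mem (P.smul_mem _ ha) (P.smul_mem _ hb), ?_⟩
        rw [real_smul_eq, real_smul_eq, real_smul_eq, real_smul_eq, smul_add,
          smul_smul, smul_add, smul_smul, smul_smul]
        match_scalars <;> simp [Complex.ext_iff, mul_comm] }
  have hle : Submodule.span ℂ (P : Set (Fin n → M2)) ≤ Q := by
    rw [Submodule.span_le]
    intro a ha
    exact ⟨a, ha, 0, P.zero_mem, by simp⟩
  exact hle hx

/-- Componentwise bracket of matrix tuples. -/
def brkt (x y : Fin n → M2) : Fin n → M2 := fun j => x j * y j - y j * x j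

/-- `brkt` is linear in its second argument. -/
def brktL (a : Fin n → M2) : (Fin n → M2) →ₗ[ℂ] (Fin n → M2) where
  toFun y := brkt a y
  map_add' y z := by
    funext j
    simp only [brkt, Pi.add_apply, mul_add, add_mul]
    abel
  map_smul' c y := by
    funext j
    simp only [brkt, Pi.smul_apply, RingHom.id_apply, Matrix.mul_smul,
      Matrix.smul_mul, smul_sub]

/-- `brkt` is linear in its first argument. -/
def brktR (y : Fin n → M2) : (Fin n → M2) →ₗ[ℂ] (Fin n → M2) where
  toFun x := brkt x y
  map_add' x z := by
    funext j
    simp only [brkt, Pi.add_apply, mul_add, add_mul]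
    abel
  map_smul' c x := by
    funext j
    simp only [brkt, Pi.smul_apply, RingHom.id_apply, Matrix.mul_smul,
      Matrix.smul_mul, smul_sub]

end Stmt7Aux
set_option maxHeartbeats 1600000 in
open Stmt7Aux in
/-- Every `su(2)` block for `ψ` contains an even number of qubits. -/
theorem stmt7 {n : ℕ} (hn : 1 ≤ n) (ψ : QState n) (hψ : ψ ≠ 0)
    (S : Set (Fin n)) (hS : Su2Block ψ S) : Even S.ncard := by
  classical
  rcases Set.eq_empty_or_nonempty S with rfl | ⟨j0, hj0⟩
  · simp
  obtain ⟨hdimK, hmin⟩ := hS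
  set K : Submodule ℝ (GV n) := stab ψ ⊓ gS S with hKdef
  -- Injectivity of each projection on K
  have hinj : ∀ x : GV n, x ∈ K → ∀ j ∈ S, x.2 j = 0 → x = 0 := by
    intro x hx j hj hxj
    have hsub : x ∈ stab ψ ⊓ gS (S \ {j}) := by
      rw [mem_stab_gS_iff]
      rw [hKdef, mem_stab_gS_iff] at hx
      obtain ⟨h1, h2, h3, h4⟩ := hx
      refine ⟨h1, h2, fun k hk => ?_, h4⟩
      by_cases hkj : k = j
      · subst hkj; exact hxj
      · refine h3 k fun hkS => hk ?_
        exact Set.mem_diff_singleton.mpr ⟨hkS, hkj⟩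
    have hz : stab ψ ⊓ gS (S \ {j}) = ⊥ :=
      Submodule.finrank_eq_zero.mp (hmin _ (Set.sdiff_singleton_ssubset.mpr hj))
    rw [hz, Submodule.mem_bot] at hsub
    exact hsub
  -- Two ℝ-independent elements of K
  have hfr : 1 < Module.finrank ℝ ↥K := hdimK
  set bK := Module.finBasis ℝ ↥K with hbK
  set i0 : Fin (Module.finrank ℝ ↥K) := ⟨0, by omega⟩ with hi0
  set i1 : Fin (Module.finrank ℝ ↥K) := ⟨1, hfr⟩ with hi1
  have hi01 : i0 ≠ i1 := by
    intro h
    rw [hi0, hi1, Fin.mk.injEq] at h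
    omega
  set x1 : GV n := (bK i0 : GV n) with hx1
  set x2 : GV n := (bK i1 : GV n) with hx2
  have hx1K : x1 ∈ K := (bK i0).2
  have hx2K : x2 ∈ K := (bK i1).2
  have hRindep : ∀ r s : ℝ, r • x1 + s • x2 = 0 → r = 0 ∧ s = 0 := by
    intro r s hrs
    have hsub : r • bK i0 + s • bK i1 = (0 : ↥K) := by
      apply Subtype.ext
      simpa [hx1, hx2] using hrs
    have h0 := congrArg (fun z => bK.repr z i0) hsub
    have h1 := congrArg (fun z => bK.repr z i1) hsub
    simp only [map_add, map_smul, Module.Basis.repr_self, Finsupp.add_apply,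
      Finsupp.smul_apply, Finsupp.single_apply, map_zero, Finsupp.coe_zero,
      Pi.zero_apply, smul_eq_mul] at h0 h1
    rw [if_neg (fun h : i1 = i0 => hi01 h.symm)] at h0
    rw [if_neg hi01] at h1
    simp at h0 h1
    exact ⟨h0, h1⟩
  have hx1fst : x1 = ((0 : ℝ), x1.2) := by
    have h := hx1K
    rw [hKdef, mem_stab_gS_iff] at h
    rw [← h.1]
  have hx2fst : x2 = ((0 : ℝ), x2.2) := by
    have h := hx2K
    rw [hKdef, mem_stab_gS_iff] at h
    rw [← h.1]
  set a1 : Fin n → M2 := x1.2 with ha1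
  set a2 : Fin n → M2 := x2.2 with ha2
  have ha1P : a1 ∈ realPart K := by rw [mem_realPart, ← hx1fst]; exact hx1K
  have ha2P : a2 ∈ realPart K := by rw [mem_realPart, ← hx2fst]; exact hx2K
  -- V : complex span of (the matrix-tuple part of) K
  set V : Submodule ℂ (Fin n → M2) :=
    Submodule.span ℂ ((realPart K : Set (Fin n → M2))) with hVdef
  have hgen : ∀ a ∈ realPart K,
      (∀ j, a j ∈ su2) ∧ (∀ j ∉ S, a j = 0) ∧ Lsum a ψ = 0 := by
    intro a ha
    rw [mem_realPart, hKdef, mem_stab_gS_iff] at ha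
    exact ⟨ha.2.1, ha.2.2.1, ha.2.2.2⟩
  have ha1V : a1 ∈ V := Submodule.subset_span ha1P
  have ha2V : a2 ∈ V := Submodule.subset_span ha2P
  -- linear properties of V
  have hVtr : ∀ x ∈ V, ∀ j, (x j).trace = 0 := by
    intro x hx j
    have hle : V ≤ LinearMap.ker
        ((Matrix.traceLinearMap (Fin 2) ℂ ℂ).comp (LinearMap.proj j)) := by
      rw [hVdef, Submodule.span_le]
      intro a ha
      have := ((hgen a ha).1 j).2
      simpa [LinearMap.mem_ker] using this
    simpa [LinearMap.mem_ker] using hle hx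
  have hVoff : ∀ x ∈ V, ∀ j ∉ S, x j = 0 := by
    intro x hx j hj
    have hle : V ≤ LinearMap.ker
        (LinearMap.proj j : (Fin n → M2) →ₗ[ℂ] M2) := by
      rw [hVdef, Submodule.span_le]
      intro a ha
      have := (hgen a ha).2.1 j hj
      simpa [LinearMap.mem_ker] using this
    simpa [LinearMap.mem_ker] using hle hx
  have hVLs : ∀ x ∈ V, Lsum x ψ = 0 := by
    intro x hx
    have hle : V ≤ LinearMap.ker (LsumL ψ) := by
      rw [hVdef, Submodule.span_le]
      intro a ha
      have := (hgen a ha).2.2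
      simpa [LinearMap.mem_ker, LsumL] using this
    have := hle hx
    simpa [LinearMap.mem_ker, LsumL] using this
  -- injectivity of each projection on V
  have hVinj : ∀ x ∈ V, ∀ j ∈ S, x j = 0 → x = 0 := by
    intro x hx j hj hxj
    obtain ⟨a, ha, b, hb, rfl⟩ := cplx_rep (realPart K) (hVdef ▸ hx)
    have hcomp : a j + Complex.I • b j = 0 := by
      simpa using hxj
    have hskew := skew_pair ((hgen a ha).1 j).1 ((hgen b hb).1 j).1 hcomp
    have ha0 : a = 0 := by
      have h := hinj ((0 : ℝ), a) (mem_realPart.mp ha) j hj hskew.1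
      have := congrArg Prod.snd h
      simpa using this
    have hb0 : b = 0 := by
      have h := hinj ((0 : ℝ), b) (mem_realPart.mp hb) j hj hskew.2
      have := congrArg Prod.snd h
      simpa using this
    rw [ha0, hb0]
    simp
  -- bracket closure of V
  have hbrVgen : ∀ a ∈ realPart K, ∀ b ∈ realPart K, brkt a b ∈ realPart K := by
    intro a ha b hb
    rw [mem_realPart, hKdef] at ha hb ⊢
    exact stab_gS_bracket ψ S ha hb
  have hbrV : ∀ x ∈ V, ∀ y ∈ V, brkt x y ∈ V := by
    have step1 : ∀ a ∈ realPart K, ∀ y ∈ V, brkt a y ∈ V := by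
      intro a ha y hy
      have hle : V ≤ Submodule.comap (brktL a) V := by
        rw [hVdef, Submodule.span_le]
        intro b hb
        simp only [SetLike.mem_coe, Submodule.mem_comap]
        exact Submodule.subset_span (hbrVgen a ha b hb)
      exact Submodule.mem_comap.mp (hle hy)
    intro x hx y hy
    have hle : V ≤ Submodule.comap (brktR y) V := by
      rw [hVdef, Submodule.span_le]
      intro a ha
      simp only [SetLike.mem_coe, Submodule.mem_comap]
      exact step1 a ha y hy
    exact Submodule.mem_comap.mp (hle hx)
  -- ℂ-independence of a1 and a2
  have htup : ∀ r s : ℝ, r • a1 + s • a2 = 0 → r = 0 ∧ s = 0 := by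
    intro r s hrs
    apply hRindep r s
    have h : r • x1 + s • x2 = ((0 : ℝ), r • a1 + s • a2) := by
      rw [hx1fst, hx2fst, Prod.smul_mk, Prod.smul_mk, Prod.mk_add_mk]
      simp
    rw [h, hrs]
    simp [Prod.mk_eq_zero]
  have hCindep : ∀ c d : ℂ, c • a1 + d • a2 = 0 → c = 0 ∧ d = 0 := by
    intro c d hcd
    rw [cplx_combo] at hcd
    have hre : ∀ j, (c.re • a1 + d.re • a2) j ∈ su2 := fun j => by
      have := su2.add_mem (su2.smul_mem c.re ((hgen a1 ha1P).1 j))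
        (su2.smul_mem d.re ((hgen a2 ha2P).1 j))
      simpa using this
    have him : ∀ j, (c.im • a1 + d.im • a2) j ∈ su2 := fun j => by
      have := su2.add_mem (su2.smul_mem c.im ((hgen a1 ha1P).1 j))
        (su2.smul_mem d.im ((hgen a2 ha2P).1 j))
      simpa using this
    have hz : ∀ j, (c.re • a1 + d.re • a2) j = 0 ∧ (c.im • a1 + d.im • a2) j = 0 := by
      intro j
      have hj : (c.re • a1 + d.re • a2) j
          + Complex.I • ((c.im • a1 + d.im • a2) j) = 0 := by
        have := congrFun hcd j
        simpa using this
      exact skew_pair (hre j).1 (him j).1 hj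
    obtain ⟨hcre, hdre⟩ := htup _ _ (funext fun j => (hz j).1)
    obtain ⟨hcim, hdim2⟩ := htup _ _ (funext fun j => (hz j).2)
    constructor
    · apply Complex.ext <;> simp [hcre, hcim]
    · apply Complex.ext <;> simp [hdre, hdim2]
  -- the projected algebra W at qubit j0
  set W : Submodule ℂ M2 := V.map (LinearMap.proj j0) with hWdef
  have hWbr : ∀ u ∈ W, ∀ v ∈ W, u * v - v * u ∈ W := by
    intro u hu v hv
    rw [hWdef, Submodule.mem_map] at hu hv
    obtain ⟨x, hx, rfl⟩ := hu
    obtain ⟨y, hy, rfl⟩ := hv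
    rw [hWdef, Submodule.mem_map]
    exact ⟨brkt x y, hbrV x hx y hy, rfl⟩
  have hWtr : ∀ u ∈ W, u.trace = 0 := by
    intro u hu
    rw [hWdef, Submodule.mem_map] at hu
    obtain ⟨x, hx, rfl⟩ := hu
    exact hVtr x hx j0
  have hWdim : 1 < Module.finrank ℂ ↥W := by
    have hmem1 : a1 j0 ∈ W := by
      rw [hWdef, Submodule.mem_map]; exact ⟨a1, ha1V, rfl⟩
    have hmem2 : a2 j0 ∈ W := by
      rw [hWdef, Submodule.mem_map]; exact ⟨a2, ha2V, rfl⟩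
    have hli : LinearIndependent ℂ ![(⟨a1 j0, hmem1⟩ : ↥W), ⟨a2 j0, hmem2⟩] := by
      rw [LinearIndependent.pair_iff]
      intro s t hst
      have hst' : s • a1 j0 + t • a2 j0 = 0 := by
        have := congrArg Subtype.val hst
        simpa using this
      have hyj : (s • a1 + t • a2) j0 = 0 := by simpa using hst'
      have hyV : s • a1 + t • a2 ∈ V :=
        Submodule.add_mem V (Submodule.smul_mem V s ha1V) (Submodule.smul_mem V t ha2V)
      exact hCindep s t (hVinj _ hyV j0 hj0 hyj)
    have h2 := hli.fintype_card_le_finrank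
    simp at h2; omega
  -- the eigenpair, pulled back to V
  obtain ⟨xh, hxhW, eh, hehW, heh0, lam, hlam, heig⟩ := eigpair_exists W hWbr hWtr hWdim
  rw [hWdef, Submodule.mem_map] at hxhW hehW
  obtain ⟨x, hxV, rfl⟩ := hxhW
  obtain ⟨e, heV, rfl⟩ := hehW
  have heVne : e ≠ 0 := by
    intro h0
    apply heh0
    rw [h0]
    simp
  have heig' : x j0 * e j0 - e j0 * x j0 = lam • e j0 := heig
  have hzeq : brkt x e = lam • e := by
    have hz1 : brkt x e - lam • e ∈ V :=
      Submodule.sub_mem V (hbrV x hxV e heV) (Submodule.smul_mem V lam heV)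
    have hz2 : (brkt x e - lam • e) j0 = 0 := by
      simp only [Pi.sub_apply, Pi.smul_apply]
      show x j0 * e j0 - e j0 * x j0 - lam • e j0 = 0
      rw [heig', sub_self]
    have h := hVinj _ hz1 j0 hj0 hz2
    exact sub_eq_zero.mp h
  have hcomp : ∀ j ∈ S, x j * e j - e j * x j = lam • e j := by
    intro j hj
    have := congrFun hzeq j
    simpa [brkt] using this
  have hsq : ∀ j ∈ S, x j * x j = ((lam ^ 2 / 4 : ℂ)) • 1 := by
    intro j hj
    refine sq_of_eigen (hVtr x hxV j) ?_ hlam (hcomp j hj)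
    intro h0
    exact heVne (hVinj e heV j hj h0)
  -- normalize to involutions
  set y : Fin n → M2 := ((2 / lam : ℂ)) • x with hy
  have hyV : y ∈ V := Submodule.smul_mem V _ hxV
  have hysq : ∀ j ∈ S, y j * y j = 1 := by
    intro j hj
    rw [hy]
    simp only [Pi.smul_apply]
    rw [Matrix.smul_mul, Matrix.mul_smul, hsq j hj, smul_smul, smul_smul]
    have hone : 2 / lam * (2 / lam) * (lam ^ 2 / 4) = 1 := by
      field_simp
      ring
    rw [hone, one_smul]
  -- final eigenvalue argument
  set T : Finset (Fin n) := (S.toFinite).toFinset with hT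
  have hTmem : ∀ j, j ∈ T ↔ j ∈ S := fun j => Set.Finite.mem_toFinset _
  have hsum0 : ∑ j ∈ T, applySingle j (y j) ψ = (0 : ℂ) • ψ := by
    have h1 : ∑ j ∈ Finset.univ, applySingle j (y j) ψ = 0 := hVLs y hyV
    have h2 : ∑ j ∈ T, applySingle j (y j) ψ
        = ∑ j ∈ Finset.univ, applySingle j (y j) ψ := by
      refine Finset.sum_subset (Finset.subset_univ T) ?_
      intro j _ hj
      rw [hVoff y hyV j (fun hjS => hj ((hTmem j).mpr hjS)), aps_zero_X]
    rw [h2, h1, zero_smul]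
  obtain ⟨m, hm, h0⟩ :=
    eigen_sum_invol T y (fun j hj => hysq j ((hTmem j).mp hj)) ψ hψ 0 hsum0
  have hcard : (T.card : ℂ) = 2 * m := by linear_combination -h0
  have hcard' : T.card = 2 * m := by exact_mod_cast hcard
  have hncard : S.ncard = T.card := Set.ncard_eq_toFinset_card S (S.toFinite)
  rw [hncard, hcard']
  exact ⟨m, by omega⟩
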